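/- arXiv:0905.1879 — 2 statements merged into one kernel-verified Lean document; each statement's English description precedes it below -/
import Mathlib

section
/- Let C be an exact inverse category and f : A → B a morphism of C. Then P(f) ∘ P′(f) ∘ P(f) = P(f) as functions P(A) → P(B), and P′(f) ∘ P(f) ∘ P′(f) = P′(f) as functions P(B) → P(A). -/
open CategoryTheory CategoryTheory.Limits

universe v u

/-- An operation assigning to each morphism a morphism in the opposite direction. -/
def MorphismOp (C : Type u) [Category.{v} C] : Type (max u v) :=
  ∀ {A B : C}, (A ⟶ B) → (B ⟶ A)

variable {C : Type u} [Category.{v} C]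

/-- `s` is an involution: a contravariant endofunctor which is the identity on objects
and involutive on morphisms. -/
def IsInvolution (s : MorphismOp C) : Prop :=
  (∀ {A B D : C} (f : A ⟶ B) (g : B ⟶ D), s (f ≫ g) = s g ≫ s f) ∧
  (∀ A : C, s (𝟙 A) = 𝟙 A) ∧
  (∀ {A B : C} (f : A ⟶ B), s (s f) = f)

/-- A projection on `A` is an idempotent endomorphism fixed by the involution `s`. -/
def IsProjection (s : MorphismOp C) {A : C} (i : A ⟶ A) : Prop :=
  i ≫ i = i ∧ s i = i

/-- `g` is a Moore–Penrose generalized inverse of `f` with respect to `s`: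
`f g f = f`, `g f g = g`, `(f g)* = f g`, `(g f)* = g f`. -/
def IsMoorePenrose (s : MorphismOp C) {A B : C} (f : A ⟶ B) (g : B ⟶ A) : Prop :=
  f ≫ g ≫ f = f ∧ g ≫ f ≫ g = g ∧ s (f ≫ g) = f ≫ g ∧ s (g ≫ f) = g ≫ f

/-- `inv` makes `C` an inverse category: each morphism `f` has `inv f` as its unique
generalized inverse (`f ∘ (inv f) ∘ f = f` and `(inv f) ∘ f ∘ (inv f) = inv f`). -/
def IsInverseOp (inv : MorphismOp C) : Prop :=
  ∀ {A B : C} (f : A ⟶ B),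
    (f ≫ inv f ≫ f = f ∧ inv f ≫ f ≫ inv f = inv f) ∧
    ∀ g : B ⟶ A, f ≫ g ≫ f = f → g ≫ f ≫ g = g → g = inv f

/-- `u` is a kernel of `f`. -/
def IsKernelOf [HasZeroMorphisms C] {K A B : C} (u : K ⟶ A) (f : A ⟶ B) : Prop :=
  u ≫ f = 0 ∧ ∀ {X : C} (g : X ⟶ A), g ≫ f = 0 → ∃! h : X ⟶ K, h ≫ u = g

/-- `v` is a cokernel of `f`. -/
def IsCokernelOf [HasZeroMorphisms C] {A B Q : C} (v : B ⟶ Q) (f : A ⟶ B) : Prop :=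
  f ≫ v = 0 ∧ ∀ {X : C} (g : B ⟶ X), f ≫ g = 0 → ∃! h : Q ⟶ X, v ≫ h = g

/-- An exact category (in the sense of the paper): a category with a zero object,
kernels and cokernels, in which every monomorphism is a kernel, every epimorphism is a
cokernel, and every morphism factors as a monomorphism composed with an epimorphism. -/
structure IsExactCategory (C : Type u) [Category.{v} C] [HasZeroObject C]
    [HasZeroMorphisms C] : Prop where
  hasKernels : ∀ {A B : C} (f : A ⟶ B), ∃ (K : C) (u : K ⟶ A), IsKernelOf u f
  hasCokernels : ∀ {A B : C} (f : A ⟶ B), ∃ (Q : C) (v : B ⟶ Q), IsCokernelOf v f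
  normal : ∀ {X A : C} (u : X ⟶ A), Mono u → ∃ (B : C) (f : A ⟶ B), IsKernelOf u f
  conormal : ∀ {A B : C} (v : A ⟶ B), Epi v → ∃ (X : C) (f : X ⟶ A), IsCokernelOf v f
  monoEpiFact : ∀ {A B : C} (f : A ⟶ B),
    ∃ (I : C) (q : A ⟶ I) (p : I ⟶ B), Epi q ∧ Mono p ∧ q ≫ p = f

/-- A Baer*-structure on `C` with respect to `s`: each morphism `f` has a projection
`f′ = prj f` on its domain with `f ∘ g = 0` iff `g` factors through `f′`. -/
structure BaerStar (C : Type u) [Category.{v} C] [HasZeroObject C] [HasZeroMorphisms C]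
    (s : MorphismOp C) where
  prj : ∀ {A B : C}, (A ⟶ B) → (A ⟶ A)
  prj_isProjection : ∀ {A B : C} (f : A ⟶ B), IsProjection s (prj f)
  prj_spec : ∀ {A B X : C} (f : A ⟶ B) (g : X ⟶ A),
    g ≫ f = 0 ↔ ∃ h : X ⟶ A, g = h ≫ prj f

/-- The natural partial order on projections: `e ≤ f` iff `e = e ∘ f`. -/
def ProjLe {A : C} (e f : A ⟶ A) : Prop := f ≫ e = e

/-- `p` is the image of `g`: the smallest subobject of the codomain of `g` through
which `g` factors. -/
def IsImageOf {A B I : C} (p : I ⟶ B) (g : A ⟶ B) : Prop :=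
  Mono p ∧ (∃ t : A ⟶ I, t ≫ p = g) ∧
  ∀ {S : C} (t : A ⟶ S) (m : S ⟶ B), Mono m → t ≫ m = g → ∃ w : I ⟶ S, w ≫ m = p


lemma aux_inv_unique (inv : MorphismOp C) (hinv : IsInverseOp inv) {A B : C}
    (f : A ⟶ B) (g : B ⟶ A) (h1 : f ≫ g ≫ f = f) (h2 : g ≫ f ≫ g = g) :
    g = inv f :=
  (hinv f).2 g h1 h2

lemma aux_inv_inv (inv : MorphismOp C) (hinv : IsInverseOp inv) {A B : C}
    (f : A ⟶ B) : inv (inv f) = f :=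
  (aux_inv_unique inv hinv (inv f) f (hinv f).1.2 (hinv f).1.1).symm

lemma aux_idem_self_inv (inv : MorphismOp C) (hinv : IsInverseOp inv) {A : C}
    (e : A ⟶ A) (he : e ≫ e = e) : inv e = e :=
  (aux_inv_unique inv hinv e e (by rw [he, he]) (by rw [he, he])).symm

lemma aux_comp_idem (inv : MorphismOp C) (hinv : IsInverseOp inv) {A : C}
    (e f : A ⟶ A) (he : e ≫ e = e) (hf : f ≫ f = f) :
    (e ≫ f) ≫ (e ≫ f) = e ≫ f := by
  set u := e ≫ f with hu
  set x := inv u with hx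
  have hux : u ≫ x ≫ u = u := (hinv u).1.1
  have hxu : x ≫ u ≫ x = x := (hinv u).1.2
  have hy : f ≫ x ≫ e = x := by
    apply aux_inv_unique inv hinv
    · calc u ≫ (f ≫ x ≫ e) ≫ u
          = e ≫ (f ≫ f) ≫ x ≫ (e ≫ e) ≫ f := by
            simp only [hu, Category.assoc]
        _ = e ≫ f ≫ x ≫ e ≫ f := by rw [hf, he]
        _ = u ≫ x ≫ u := by simp only [hu, Category.assoc]
        _ = u := hux
    · calc (f ≫ x ≫ e) ≫ u ≫ (f ≫ x ≫ e)
          = f ≫ (x ≫ (e ≫ e) ≫ (f ≫ f) ≫ x) ≫ e := by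
            simp only [hu, Category.assoc]
        _ = f ≫ (x ≫ u ≫ x) ≫ e := by
            simp only [he, hf, hu, Category.assoc]
        _ = f ≫ x ≫ e := by rw [hxu]
  have hxidem : x ≫ x = x := by
    calc x ≫ x = (f ≫ x ≫ e) ≫ (f ≫ x ≫ e) := by rw [hy]
      _ = f ≫ (x ≫ (e ≫ f) ≫ x) ≫ e := by simp only [Category.assoc]
      _ = f ≫ (x ≫ u ≫ x) ≫ e := by rw [← hu]
      _ = x := by rw [hxu, hy]
  have hueq : u = x := by
    have h1 : inv x = x := aux_idem_self_inv inv hinv x hxidem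
    have h2 : inv x = u := by rw [hx]; exact aux_inv_inv inv hinv u
    rw [← h2, h1]
  rw [← hueq] at hxidem
  exact hxidem

lemma aux_idem_comm (inv : MorphismOp C) (hinv : IsInverseOp inv) {A : C}
    (e f : A ⟶ A) (he : e ≫ e = e) (hf : f ≫ f = f) : e ≫ f = f ≫ e := by
  have hu : (e ≫ f) ≫ (e ≫ f) = e ≫ f := aux_comp_idem inv hinv e f he hf
  have hv : (f ≫ e) ≫ (f ≫ e) = f ≫ e := aux_comp_idem inv hinv f e hf he
  have h1 : f ≫ e = inv (e ≫ f) := by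
    apply aux_inv_unique inv hinv
    · calc (e ≫ f) ≫ (f ≫ e) ≫ (e ≫ f)
          = e ≫ (f ≫ f) ≫ (e ≫ e) ≫ f := by simp only [Category.assoc]
        _ = (e ≫ f) ≫ (e ≫ f) := by rw [hf, he]; simp only [Category.assoc]
        _ = e ≫ f := hu
    · calc (f ≫ e) ≫ (e ≫ f) ≫ (f ≫ e)
          = f ≫ (e ≫ e) ≫ (f ≫ f) ≫ e := by simp only [Category.assoc]
        _ = (f ≫ e) ≫ (f ≫ e) := by rw [he, hf]; simp only [Category.assoc]
        _ = f ≫ e := hv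
  rw [h1, aux_idem_self_inv inv hinv _ hu]

lemma aux_inv_comp (inv : MorphismOp C) (hinv : IsInverseOp inv) {A B D : C}
    (f : A ⟶ B) (g : B ⟶ D) : inv (f ≫ g) = inv g ≫ inv f := by
  have hgg : (g ≫ inv g) ≫ (g ≫ inv g) = g ≫ inv g := by
    have := (hinv g).1.1
    calc (g ≫ inv g) ≫ (g ≫ inv g) = (g ≫ inv g ≫ g) ≫ inv g := by
          simp only [Category.assoc]
      _ = g ≫ inv g := by rw [this]
  have hff : (inv f ≫ f) ≫ (inv f ≫ f) = inv f ≫ f := by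
    have := (hinv f).1.2
    calc (inv f ≫ f) ≫ (inv f ≫ f) = (inv f ≫ f ≫ inv f) ≫ f := by
          simp only [Category.assoc]
      _ = inv f ≫ f := by rw [this]
  have hcomm : (g ≫ inv g) ≫ (inv f ≫ f) = (inv f ≫ f) ≫ (g ≫ inv g) :=
    aux_idem_comm inv hinv _ _ hgg hff
  symm
  apply aux_inv_unique inv hinv
  · calc (f ≫ g) ≫ (inv g ≫ inv f) ≫ (f ≫ g)
        = f ≫ ((g ≫ inv g) ≫ (inv f ≫ f)) ≫ g := by simp only [Category.assoc]
      _ = f ≫ ((inv f ≫ f) ≫ (g ≫ inv g)) ≫ g := by rw [hcomm]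
      _ = (f ≫ inv f ≫ f) ≫ (g ≫ inv g ≫ g) := by simp only [Category.assoc]
      _ = f ≫ g := by rw [(hinv f).1.1, (hinv g).1.1]
  · calc (inv g ≫ inv f) ≫ (f ≫ g) ≫ (inv g ≫ inv f)
        = inv g ≫ ((inv f ≫ f) ≫ (g ≫ inv g)) ≫ inv f := by
          simp only [Category.assoc]
      _ = inv g ≫ ((g ≫ inv g) ≫ (inv f ≫ f)) ≫ inv f := by rw [← hcomm]
      _ = (inv g ≫ g ≫ inv g) ≫ (inv f ≫ f ≫ inv f) := by
          simp only [Category.assoc]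
      _ = inv g ≫ inv f := by rw [(hinv f).1.2, (hinv g).1.2]

lemma aux_inv_zero [HasZeroMorphisms C] (inv : MorphismOp C)
    (hinv : IsInverseOp inv) (A B : C) : inv (0 : A ⟶ B) = 0 :=
  (aux_inv_unique inv hinv 0 0 (by simp) (by simp)).symm

/-- Conjugating a projection gives a projection. -/
lemma aux_sandwich (inv : MorphismOp C) (hinv : IsInverseOp inv) {A B : C}
    (f : A ⟶ B) (i : A ⟶ A) (hi : IsProjection inv i) :
    IsProjection inv (inv f ≫ i ≫ f) := by
  have hfa : (f ≫ inv f) ≫ (f ≫ inv f) = f ≫ inv f := by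
    calc (f ≫ inv f) ≫ (f ≫ inv f) = (f ≫ inv f ≫ f) ≫ inv f := by
          simp only [Category.assoc]
      _ = f ≫ inv f := by rw [(hinv f).1.1]
  have hcomm : i ≫ (f ≫ inv f) = (f ≫ inv f) ≫ i :=
    aux_idem_comm inv hinv _ _ hi.1 hfa
  constructor
  · calc (inv f ≫ i ≫ f) ≫ (inv f ≫ i ≫ f)
        = inv f ≫ (i ≫ (f ≫ inv f)) ≫ i ≫ f := by simp only [Category.assoc]
      _ = inv f ≫ ((f ≫ inv f) ≫ i) ≫ i ≫ f := by rw [hcomm]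
      _ = (inv f ≫ f ≫ inv f) ≫ (i ≫ i) ≫ f := by simp only [Category.assoc]
      _ = inv f ≫ i ≫ f := by rw [(hinv f).1.2, hi.1]
  · have hi2 : inv i = i := hi.2
    show inv (inv f ≫ i ≫ f) = inv f ≫ i ≫ f
    rw [aux_inv_comp inv hinv, aux_inv_comp inv hinv, aux_inv_inv inv hinv,
      hi2, Category.assoc]

section Baer

variable [HasZeroObject C] [HasZeroMorphisms C]

lemma aux_prj_comp (inv : MorphismOp C) (Bs : BaerStar C inv) {A B : C}
    (f : A ⟶ B) : Bs.prj f ≫ f = 0 :=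
  (Bs.prj_spec f (Bs.prj f)).2 ⟨𝟙 A, (Category.id_comp _).symm⟩

lemma aux_comp_prj_iff (inv : MorphismOp C) (Bs : BaerStar C inv) {A B X : C}
    (f : A ⟶ B) (g : X ⟶ A) : g ≫ f = 0 ↔ g ≫ Bs.prj f = g := by
  constructor
  · intro h
    obtain ⟨h', rfl⟩ := (Bs.prj_spec f g).1 h
    rw [Category.assoc, (Bs.prj_isProjection f).1]
  · intro h
    rw [← h, Category.assoc, aux_prj_comp, comp_zero]

lemma aux_proj_comp_prj (inv : MorphismOp C) (hinv : IsInverseOp inv)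
    (Bs : BaerStar C inv) {B : C} (j : B ⟶ B) (hj : IsProjection inv j) :
    j ≫ Bs.prj j = 0 := by
  have hj2 : inv j = j := hj.2
  have hp2 : inv (Bs.prj j) = Bs.prj j := (Bs.prj_isProjection j).2
  have h : Bs.prj j ≫ j = 0 := aux_prj_comp inv Bs j
  calc j ≫ Bs.prj j = inv (Bs.prj j ≫ j) := by
        rw [aux_inv_comp inv hinv, hj2, hp2]
    _ = 0 := by rw [h, aux_inv_zero inv hinv]

lemma aux_prj_unique (inv : MorphismOp C) (hinv : IsInverseOp inv)
    (Bs : BaerStar C inv) {A B : C} (f : A ⟶ B) (p : A ⟶ A)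
    (hp : IsProjection inv p)
    (hspec : ∀ {X : C} (g : X ⟶ A), g ≫ f = 0 ↔ ∃ h : X ⟶ A, g = h ≫ p) :
    p = Bs.prj f := by
  have h1 : p ≫ f = 0 := (hspec p).2 ⟨p, hp.1.symm⟩
  have h2 : p ≫ Bs.prj f = p := (aux_comp_prj_iff inv Bs f p).1 h1
  obtain ⟨h, hh⟩ := (hspec (Bs.prj f)).1 (aux_prj_comp inv Bs f)
  have h4 : Bs.prj f ≫ p = Bs.prj f := by rw [hh, Category.assoc, hp.1]
  calc p = p ≫ Bs.prj f := h2.symm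
    _ = Bs.prj f ≫ p :=
      aux_idem_comm inv hinv p (Bs.prj f) hp.1 (Bs.prj_isProjection f).1
    _ = Bs.prj f := h4

lemma aux_prj_prj_comp (inv : MorphismOp C) (hinv : IsInverseOp inv)
    (Bs : BaerStar C inv) {A B : C} (f : A ⟶ B) :
    Bs.prj (Bs.prj f) ≫ f = f := by
  have hp2 : inv (Bs.prj f) = Bs.prj f := (Bs.prj_isProjection f).2
  have hpp2 : inv (Bs.prj (Bs.prj f)) = Bs.prj (Bs.prj f) :=
    (Bs.prj_isProjection (Bs.prj f)).2
  have h0 : inv f ≫ Bs.prj f = 0 := by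
    calc inv f ≫ Bs.prj f = inv (Bs.prj f ≫ f) := by
          rw [aux_inv_comp inv hinv, hp2]
      _ = 0 := by rw [aux_prj_comp, aux_inv_zero inv hinv]
  have h1 : inv f ≫ Bs.prj (Bs.prj f) = inv f :=
    (aux_comp_prj_iff inv Bs (Bs.prj f) (inv f)).1 h0
  calc Bs.prj (Bs.prj f) ≫ f = inv (inv f ≫ Bs.prj (Bs.prj f)) := by
        rw [aux_inv_comp inv hinv, hpp2, aux_inv_inv inv hinv]
    _ = f := by rw [h1, aux_inv_inv inv hinv]

lemma aux_prj3 (inv : MorphismOp C) (hinv : IsInverseOp inv)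
    (Bs : BaerStar C inv) {A B : C} (f : A ⟶ B) :
    Bs.prj (Bs.prj (Bs.prj f)) = Bs.prj f := by
  symm
  apply aux_prj_unique inv hinv Bs (Bs.prj (Bs.prj f)) (Bs.prj f)
    (Bs.prj_isProjection f)
  intro X g
  constructor
  · intro h
    apply (Bs.prj_spec f g).1
    have h2 : g ≫ Bs.prj (Bs.prj f) ≫ f = 0 := by
      rw [← Category.assoc, h, zero_comp]
    rwa [aux_prj_prj_comp inv hinv Bs f] at h2
  · rintro ⟨h, rfl⟩
    rw [Category.assoc,
      aux_proj_comp_prj inv hinv Bs (Bs.prj f) (Bs.prj_isProjection f),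
      comp_zero]

/-- In an exact inverse category, every projection is closed. -/
lemma aux_proj_closed (inv : MorphismOp C) (hinv : IsInverseOp inv)
    (Bs : BaerStar C inv) (hC : IsExactCategory C) {B : C} (j : B ⟶ B)
    (hj : IsProjection inv j) : Bs.prj (Bs.prj j) = j := by
  obtain ⟨I, q, p, hq, hp, hqp⟩ := hC.monoEpiFact j
  obtain ⟨D, g, hg0, hgker⟩ := hC.normal p hp
  have hpq : p ≫ q = 𝟙 I := by
    have h1 : (q ≫ p) ≫ (q ≫ p) = q ≫ p := by rw [hqp]; exact hj.1
    have h2 : q ≫ (p ≫ q) ≫ p = q ≫ 𝟙 I ≫ p := by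
      simpa only [Category.assoc, Category.id_comp] using h1
    have h3 : (p ≫ q) ≫ p = 𝟙 I ≫ p := hq.left_cancellation _ _ h2
    exact hp.right_cancellation _ _ (by simpa only [Category.id_comp] using h3)
  have hjg : j = Bs.prj g := by
    apply aux_prj_unique inv hinv Bs g j hj
    intro X x
    constructor
    · intro hx
      obtain ⟨h, hh, -⟩ := hgker x hx
      refine ⟨h ≫ p, ?_⟩
      rw [← hqp, Category.assoc, ← Category.assoc p q p, hpq,
        Category.id_comp, hh]
    · rintro ⟨h, rfl⟩
      rw [← hqp, Category.assoc, Category.assoc, hg0, comp_zero, comp_zero]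
  calc Bs.prj (Bs.prj j) = Bs.prj (Bs.prj (Bs.prj g)) := by rw [← hjg]
    _ = Bs.prj g := aux_prj3 inv hinv Bs g
    _ = j := hjg.symm

end Baer

/-- In an exact inverse category,
`P(f) ∘ P′(f) ∘ P(f) = P(f)` and `P′(f) ∘ P(f) ∘ P′(f) = P′(f)` as functions on
projections. -/
theorem stmt17 [HasZeroObject C] [HasZeroMorphisms C] (inv : MorphismOp C)
    (hinv : IsInverseOp inv) (hC : IsExactCategory C) (Bs : BaerStar C inv)
    {A B : C} (f : A ⟶ B) :
    (∀ i : A ⟶ A, IsProjection inv i →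
      inv f ≫ (Bs.prj (f ≫ Bs.prj (inv f ≫ i ≫ f))) ≫ f = inv f ≫ i ≫ f) ∧
    (∀ j : B ⟶ B, IsProjection inv j →
      Bs.prj (f ≫ Bs.prj (inv f ≫ (Bs.prj (f ≫ Bs.prj j)) ≫ f)) =
        Bs.prj (f ≫ Bs.prj j)) := by
  have faf : f ≫ inv f ≫ f = f := (hinv f).1.1
  have afa : inv f ≫ f ≫ inv f = inv f := (hinv f).1.2
  have hfa : (f ≫ inv f) ≫ (f ≫ inv f) = f ≫ inv f := by
    calc (f ≫ inv f) ≫ (f ≫ inv f) = (f ≫ inv f ≫ f) ≫ inv f := by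
          simp only [Category.assoc]
      _ = f ≫ inv f := by rw [faf]
  constructor
  · -- Part 1 : P(f) ∘ P′(f) ∘ P(f) = P(f)
    intro i hi
    set j := inv f ≫ i ≫ f with hj
    have hjproj : IsProjection inv j := aux_sandwich inv hinv f i hi
    set q := Bs.prj j with hq
    set p := Bs.prj (f ≫ q) with hp
    have hpproj : IsProjection inv p := Bs.prj_isProjection _
    have hXproj : IsProjection inv (inv f ≫ p ≫ f) :=
      aux_sandwich inv hinv f p hpproj
    -- step 1 : j ≫ X = j
    have h_je : j ≫ inv f ≫ f = j := by
      calc j ≫ inv f ≫ f = inv f ≫ i ≫ (f ≫ inv f ≫ f) := by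
            simp only [hj, Category.assoc]
        _ = j := by rw [faf, hj]
    have h_jq : j ≫ q = 0 := aux_proj_comp_prj inv hinv Bs j hjproj
    have h1 : (j ≫ inv f) ≫ (f ≫ q) = 0 := by
      calc (j ≫ inv f) ≫ (f ≫ q) = (j ≫ inv f ≫ f) ≫ q := by
            simp only [Category.assoc]
        _ = 0 := by rw [h_je, h_jq]
    have h2 : (j ≫ inv f) ≫ p = j ≫ inv f := by
      rw [hp]; exact (aux_comp_prj_iff inv Bs (f ≫ q) (j ≫ inv f)).1 h1
    have h_jX : j ≫ inv f ≫ p ≫ f = j := by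
      calc j ≫ inv f ≫ p ≫ f = ((j ≫ inv f) ≫ p) ≫ f := by
            simp only [Category.assoc]
        _ = (j ≫ inv f) ≫ f := by rw [h2]
        _ = j := by rw [Category.assoc, h_je]
    -- step 2 : X ≫ j = X
    have hcomm_i : i ≫ (f ≫ inv f) = (f ≫ inv f) ≫ i :=
      aux_idem_comm inv hinv _ _ hi.1 hfa
    have h_fj : f ≫ j = i ≫ f := by
      calc f ≫ j = ((f ≫ inv f) ≫ i) ≫ f := by simp only [hj, Category.assoc]
        _ = (i ≫ (f ≫ inv f)) ≫ f := by rw [← hcomm_i]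
        _ = i ≫ f ≫ inv f ≫ f := by simp only [Category.assoc]
        _ = i ≫ f := by rw [faf]
    have h_pfq : (p ≫ f) ≫ q = 0 := by
      have h3 : p ≫ f ≫ q = 0 := by
        rw [hp]
        simpa only [Category.assoc] using aux_prj_comp inv Bs (f ≫ q)
      simpa only [Category.assoc] using h3
    have h_qq : Bs.prj q = j := by
      rw [hq]; exact aux_proj_closed inv hinv Bs hC j hjproj
    have h_pfj : (p ≫ f) ≫ j = p ≫ f := by
      rw [← h_qq]
      exact (aux_comp_prj_iff inv Bs q (p ≫ f)).1 h_pfq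
    have h_Xj : (inv f ≫ p ≫ f) ≫ j = inv f ≫ p ≫ f := by
      calc (inv f ≫ p ≫ f) ≫ j = inv f ≫ ((p ≫ f) ≫ j) := by
            simp only [Category.assoc]
        _ = inv f ≫ p ≫ f := by rw [h_pfj]
    -- combine
    have hcomm : (inv f ≫ p ≫ f) ≫ j = j ≫ (inv f ≫ p ≫ f) :=
      aux_idem_comm inv hinv _ _ hXproj.1 hjproj.1
    calc inv f ≫ p ≫ f = (inv f ≫ p ≫ f) ≫ j := h_Xj.symm
      _ = j ≫ (inv f ≫ p ≫ f) := hcomm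
      _ = j := h_jX
  · -- Part 2 : P′(f) ∘ P(f) ∘ P′(f) = P′(f)
    intro j hj
    set q := Bs.prj j with hq
    set r := Bs.prj (f ≫ q) with hr
    have hrproj : IsProjection inv r := Bs.prj_isProjection _
    set k := inv f ≫ r ≫ f with hk
    have hkproj : IsProjection inv k := aux_sandwich inv hinv f r hrproj
    have hkk : Bs.prj (Bs.prj k) = k := aux_proj_closed inv hinv Bs hC k hkproj
    have hcomm_r : r ≫ (f ≫ inv f) = (f ≫ inv f) ≫ r :=
      aux_idem_comm inv hinv _ _ hrproj.1 hfa
    symm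
    apply aux_prj_unique inv hinv Bs (f ≫ Bs.prj k) r hrproj
    intro X g
    constructor
    · intro hg
      have h1 : (g ≫ f) ≫ Bs.prj (Bs.prj k) = g ≫ f :=
        (aux_comp_prj_iff inv Bs (Bs.prj k) (g ≫ f)).1
          (by simpa only [Category.assoc] using hg)
      have h2 : (g ≫ f) ≫ k = g ≫ f := by rw [← hkk]; exact h1
      have h4 : r ≫ f ≫ q = 0 := by
        rw [hr]
        simpa only [Category.assoc] using aux_prj_comp inv Bs (f ≫ q)
      have h3 : g ≫ f ≫ q = 0 := by
        have e1 : g ≫ f ≫ q = g ≫ f ≫ inv f ≫ r ≫ f ≫ q := by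
          conv_lhs => rw [← Category.assoc, ← h2]
          simp only [hk, Category.assoc]
        rw [e1, h4, comp_zero, comp_zero, comp_zero]
      have h5 : g ≫ r = g := by
        rw [hr]
        exact (aux_comp_prj_iff inv Bs (f ≫ q) g).1
          (by simpa only [Category.assoc] using h3)
      exact ⟨g, h5.symm⟩
    · rintro ⟨h, rfl⟩
      have hx : ((h ≫ r) ≫ f) ≫ k = (h ≫ r) ≫ f := by
        simp only [hk, Category.assoc]
        rw [reassoc_of% hcomm_r, reassoc_of% hrproj.1,
          ← reassoc_of% hcomm_r, faf]
      have h0 : ((h ≫ r) ≫ f) ≫ Bs.prj k = 0 := by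
        apply (aux_comp_prj_iff inv Bs (Bs.prj k) ((h ≫ r) ≫ f)).2
        rw [hkk]; exact hx
      simpa only [Category.assoc] using h0
end

section
/- Let C be an exact inverse category and f : A → B a morphism of C, with transfer function P″(f) : P(B) → P(A), P″(f)(j) := ((j ∘ f)′)′. Then: (i) P″(f) is injective if and only if f is an epimorphism, and surjective if and only if f is a monomorphism; (ii) P″(f)(0_B) = 0_A and P″(f)(1_B) = f″ := (f′)′; (iii) P″(f)((f*)′) = 0_A; (iv) P″(f)(j₁ ∘ j₂) = P″(f)(j₁) ∘ P″(f)(j₂) for all projections j₁, j₂ on B; (v) j₁ ≤ j₂ implies P″(f)(j₁) ≤ P″(f)(j₂); (vi) P″(f)(j) ≤ f″ for every projection j on B; (vii) if j ≤ (f*)′ then P″(f)(j) = 0_A. -/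
open CategoryTheory CategoryTheory.Limits

universe v u

variable {C : Type u} [Category.{v} C]

namespace St18
open CategoryTheory CategoryTheory.Limits

variable {C : Type u} [Category.{v} C]

lemma inv_uniq (inv : MorphismOp C) (hinv : IsInverseOp inv) {A B : C} {f : A ⟶ B} {g : B ⟶ A}
    (h1 : f ≫ g ≫ f = f) (h2 : g ≫ f ≫ g = g) : g = inv f := (hinv f).2 g h1 h2

lemma fgf (inv : MorphismOp C) (hinv : IsInverseOp inv) {A B : C} (f : A ⟶ B) :
    f ≫ inv f ≫ f = f := (hinv f).1.1

lemma gfg (inv : MorphismOp C) (hinv : IsInverseOp inv) {A B : C} (f : A ⟶ B) :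
    inv f ≫ f ≫ inv f = inv f := (hinv f).1.2

lemma inv_inv (inv : MorphismOp C) (hinv : IsInverseOp inv) {A B : C} (f : A ⟶ B) :
    inv (inv f) = f := (inv_uniq inv hinv (gfg inv hinv f) (fgf inv hinv f)).symm

lemma inv_id (inv : MorphismOp C) (hinv : IsInverseOp inv) (A : C) :
    inv (𝟙 A) = 𝟙 A := (inv_uniq inv hinv (by simp) (by simp)).symm

lemma inv_zero [HasZeroMorphisms C] (inv : MorphismOp C) (hinv : IsInverseOp inv) {A B : C} :
    inv (0 : A ⟶ B) = (0 : B ⟶ A) := (inv_uniq inv hinv (by simp) (by simp)).symm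

end St18
namespace St18
open CategoryTheory CategoryTheory.Limits

variable {C : Type u} [Category.{v} C]

lemma idem_comp (inv : MorphismOp C) (hinv : IsInverseOp inv) {A : C} {e f : A ⟶ A}
    (he : e ≫ e = e) (hf : f ≫ f = f) : (e ≫ f) ≫ (e ≫ f) = e ≫ f := by
  have hxgx : (e ≫ f) ≫ inv (e ≫ f) ≫ (e ≫ f) = e ≫ f := fgf inv hinv (e ≫ f)
  have hgxg : inv (e ≫ f) ≫ (e ≫ f) ≫ inv (e ≫ f) = inv (e ≫ f) := gfg inv hinv (e ≫ f)
  have hgxg' := reassoc_of% hgxg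
  have hH : f ≫ inv (e ≫ f) ≫ e = inv (e ≫ f) := by
    apply inv_uniq inv hinv
    · show (e ≫ f) ≫ (f ≫ inv (e ≫ f) ≫ e) ≫ (e ≫ f) = e ≫ f
      simp only [Category.assoc]
      rw [reassoc_of% hf, reassoc_of% he]
      simpa only [Category.assoc] using hxgx
    · show (f ≫ inv (e ≫ f) ≫ e) ≫ (e ≫ f) ≫ (f ≫ inv (e ≫ f) ≫ e) = f ≫ inv (e ≫ f) ≫ e
      simp only [Category.assoc]
      rw [reassoc_of% he, reassoc_of% hf, hgxg']
  have hg_idem : inv (e ≫ f) ≫ inv (e ≫ f) = inv (e ≫ f) := by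
    conv_lhs => rw [← hH]
    simp only [Category.assoc]
    rw [hgxg']
    exact hH
  have hg_selfinv : inv (e ≫ f) = inv (inv (e ≫ f)) :=
    inv_uniq inv hinv (by rw [hg_idem, hg_idem]) (by rw [hg_idem, hg_idem])
  have hx_eq : e ≫ f = inv (inv (e ≫ f)) := by
    apply inv_uniq inv hinv
    · simpa only [Category.assoc] using hgxg
    · simpa only [Category.assoc] using hxgx
  have hx_g : e ≫ f = inv (e ≫ f) := hx_eq.trans hg_selfinv.symm
  rw [hx_g]; exact hg_idem

lemma idem_comm (inv : MorphismOp C) (hinv : IsInverseOp inv) {A : C} {e f : A ⟶ A}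
    (he : e ≫ e = e) (hf : f ≫ f = f) : e ≫ f = f ≫ e := by
  have ha : (e ≫ f) ≫ (e ≫ f) = e ≫ f := idem_comp inv hinv he hf
  have hb : (f ≫ e) ≫ (f ≫ e) = f ≫ e := idem_comp inv hinv hf he
  have h1 : (e ≫ f) ≫ (f ≫ e) ≫ (e ≫ f) = e ≫ f := by
    simp only [Category.assoc]
    rw [reassoc_of% hf, reassoc_of% he]
    simpa only [Category.assoc] using ha
  have h2 : (f ≫ e) ≫ (e ≫ f) ≫ (f ≫ e) = f ≫ e := by
    simp only [Category.assoc]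
    rw [reassoc_of% he, reassoc_of% hf]
    simpa only [Category.assoc] using hb
  have hba : f ≫ e = inv (e ≫ f) := inv_uniq inv hinv h1 h2
  have haa : e ≫ f = inv (e ≫ f) := by
    apply inv_uniq inv hinv
    · rw [ha, ha]
    · rw [ha, ha]
  rw [haa, ← hba]

lemma dom_idem (inv : MorphismOp C) (hinv : IsInverseOp inv) {A B : C} (f : A ⟶ B) :
    (f ≫ inv f) ≫ (f ≫ inv f) = f ≫ inv f := by
  simp only [Category.assoc]; rw [gfg inv hinv f]

lemma cod_idem (inv : MorphismOp C) (hinv : IsInverseOp inv) {A B : C} (f : A ⟶ B) :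
    (inv f ≫ f) ≫ (inv f ≫ f) = inv f ≫ f := by
  simp only [Category.assoc]; rw [fgf inv hinv f]

lemma inv_comp (inv : MorphismOp C) (hinv : IsInverseOp inv) {A B D : C}
    (f : A ⟶ B) (g : B ⟶ D) : inv (f ≫ g) = inv g ≫ inv f := by
  have hc : (g ≫ inv g) ≫ (inv f ≫ f) = (inv f ≫ f) ≫ (g ≫ inv g) :=
    idem_comm inv hinv (dom_idem inv hinv g) (cod_idem inv hinv f)
  symm
  apply inv_uniq inv hinv
  · show (f ≫ g) ≫ (inv g ≫ inv f) ≫ (f ≫ g) = f ≫ g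
    simp only [Category.assoc]
    have hc' := reassoc_of% hc
    rw [hc']
    rw [reassoc_of% (fgf inv hinv f), fgf inv hinv g]
  · show (inv g ≫ inv f) ≫ (f ≫ g) ≫ (inv g ≫ inv f) = inv g ≫ inv f
    simp only [Category.assoc]
    have hc'' := reassoc_of% hc.symm
    rw [hc'']
    rw [reassoc_of% (gfg inv hinv g), gfg inv hinv f]

end St18
namespace St18
open CategoryTheory CategoryTheory.Limits

variable {C : Type u} [Category.{v} C]

lemma isProj_idem {inv : MorphismOp C} {A : C} {p : A ⟶ A}
    (hp : IsProjection inv p) : p ≫ p = p := hp.1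

lemma isProj_sa {inv : MorphismOp C} {A : C} {p : A ⟶ A}
    (hp : IsProjection inv p) : inv p = p := hp.2

lemma mono_comp_inv (inv : MorphismOp C) (hinv : IsInverseOp inv) {K A : C} (u : K ⟶ A)
    (hu : Mono u) : u ≫ inv u = 𝟙 K := by
  apply (cancel_mono u).1
  rw [Category.id_comp, Category.assoc, fgf inv hinv u]

lemma epi_inv_comp (inv : MorphismOp C) (hinv : IsInverseOp inv) {A B : C} (q : A ⟶ B)
    (hq : Epi q) : inv q ≫ q = 𝟙 B := by
  apply (cancel_epi q).1
  rw [Category.comp_id, fgf inv hinv q]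

lemma zero_swap [HasZeroObject C] [HasZeroMorphisms C] (inv : MorphismOp C)
    (hinv : IsInverseOp inv) {A : C} {a b : A ⟶ A} (ha : inv a = a) (hb : inv b = b)
    (h : a ≫ b = 0) : b ≫ a = 0 := by
  calc b ≫ a = inv (a ≫ b) := by rw [inv_comp inv hinv, ha, hb]
    _ = 0 := by rw [h, inv_zero inv hinv]

variable [HasZeroObject C] [HasZeroMorphisms C]

lemma prj_comp (inv : MorphismOp C) (Bs : BaerStar C inv) {A B : C} (f : A ⟶ B) :
    Bs.prj f ≫ f = 0 :=
  (Bs.prj_spec f (Bs.prj f)).2 ⟨𝟙 A, by simp⟩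

lemma comp_prj_inv (inv : MorphismOp C) (hinv : IsInverseOp inv) (Bs : BaerStar C inv)
    {A B : C} (f : A ⟶ B) : f ≫ Bs.prj (inv f) = 0 := by
  calc f ≫ Bs.prj (inv f) = inv (Bs.prj (inv f) ≫ inv f) := by
        rw [inv_comp inv hinv, isProj_sa (Bs.prj_isProjection (inv f)), inv_inv inv hinv]
    _ = 0 := by rw [prj_comp inv Bs, inv_zero inv hinv]

lemma prj_unique (inv : MorphismOp C) (hinv : IsInverseOp inv) (Bs : BaerStar C inv)
    {A B : C} (f : A ⟶ B) (p : A ⟶ A) (hp : IsProjection inv p)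
    (hspec : ∀ (X : C) (g : X ⟶ A), g ≫ f = 0 ↔ ∃ h : X ⟶ A, g = h ≫ p) :
    Bs.prj f = p := by
  have h1 : p ≫ f = 0 := (hspec A p).2 ⟨p, (isProj_idem hp).symm⟩
  obtain ⟨h, hh⟩ := (Bs.prj_spec f p).1 h1
  have hpq : p ≫ Bs.prj f = p := by
    rw [hh, Category.assoc, isProj_idem (Bs.prj_isProjection f)]
  obtain ⟨h', hh'⟩ := (hspec A (Bs.prj f)).1 (prj_comp inv Bs f)
  have hqp : Bs.prj f ≫ p = Bs.prj f := by rw [hh', Category.assoc, isProj_idem hp]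
  calc Bs.prj f = inv (Bs.prj f ≫ p) := by rw [hqp, isProj_sa (Bs.prj_isProjection f)]
    _ = inv p ≫ inv (Bs.prj f) := inv_comp inv hinv _ _
    _ = p ≫ Bs.prj f := by rw [isProj_sa hp, isProj_sa (Bs.prj_isProjection f)]
    _ = p := hpq

end St18
namespace St18
open CategoryTheory CategoryTheory.Limits

variable {C : Type u} [Category.{v} C] [HasZeroObject C] [HasZeroMorphisms C]

lemma closed (inv : MorphismOp C) (hinv : IsInverseOp inv) (hC : IsExactCategory C)
    (Bs : BaerStar C inv) {A X : C} (p : A ⟶ A) (hp : IsProjection inv p)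
    (g : X ⟶ A) (hg : g ≫ Bs.prj p = 0) : g ≫ p = g := by
  obtain ⟨I, q, m, hq, hm, hqm⟩ := hC.monoEpiFact p
  have hpp : (q ≫ m) ≫ q ≫ m = q ≫ m := by rw [hqm]; exact isProj_idem hp
  have hmq : m ≫ q = 𝟙 I := by
    apply (cancel_mono m).1
    apply (cancel_epi q).1
    simpa only [Category.assoc, Category.id_comp] using hpp
  have hq_inv : q = inv m := by
    apply inv_uniq inv hinv
    · rw [← Category.assoc, hmq, Category.id_comp]
    · rw [hmq, Category.comp_id]
  have hp_eq : p = inv m ≫ m := by rw [← hq_inv, hqm]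
  obtain ⟨Q, v, hv0, hvU⟩ := hC.hasCokernels p
  have h1 : inv v ≫ p = 0 := by
    calc inv v ≫ p = inv (p ≫ v) := by
          rw [inv_comp inv hinv, isProj_sa hp]
      _ = 0 := by rw [hv0, inv_zero inv hinv]
  obtain ⟨h, hh⟩ := (Bs.prj_spec p (inv v)).1 h1
  have hv_fact : v = Bs.prj p ≫ inv h := by
    calc v = inv (inv v) := (inv_inv inv hinv v).symm
      _ = inv (h ≫ Bs.prj p) := by rw [← hh]
      _ = inv (Bs.prj p) ≫ inv h := inv_comp inv hinv _ _
      _ = Bs.prj p ≫ inv h := by rw [isProj_sa (Bs.prj_isProjection p)]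
  have hgv : g ≫ v = 0 := by rw [hv_fact, ← Category.assoc, hg, zero_comp]
  obtain ⟨B', s, hs0, hsU⟩ := hC.normal m hm
  have hps : p ≫ s = 0 := by rw [hp_eq, Category.assoc, hs0, comp_zero]
  obtain ⟨w, hw, -⟩ := hvU s hps
  have hgs : g ≫ s = 0 := by rw [← hw, ← Category.assoc, hgv, zero_comp]
  obtain ⟨h', hh', -⟩ := hsU g hgs
  rw [hp_eq, ← hh', Category.assoc, fgf inv hinv m]

lemma prjprj (inv : MorphismOp C) (hinv : IsInverseOp inv) (hC : IsExactCategory C)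
    (Bs : BaerStar C inv) {A B : C} (f : A ⟶ B) :
    Bs.prj (Bs.prj f) = f ≫ inv f := by
  have hproj : IsProjection inv (f ≫ inv f) :=
    ⟨dom_idem inv hinv f, by show inv (f ≫ inv f) = f ≫ inv f; rw [inv_comp inv hinv, inv_inv inv hinv]⟩
  have hann : ∀ (X : C) (g : X ⟶ A), g ≫ f = 0 ↔ g ≫ (f ≫ inv f) = 0 := by
    intro X g
    constructor
    · intro h; rw [← Category.assoc, h, zero_comp]
    · intro h
      have h2 := congrArg (· ≫ f) h
      simp only [Category.assoc, zero_comp] at h2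
      rwa [fgf inv hinv f] at h2
  have h1 : Bs.prj f = Bs.prj (f ≫ inv f) := by
    apply prj_unique inv hinv Bs f _ (Bs.prj_isProjection _)
    intro X g
    exact (hann X g).trans (Bs.prj_spec (f ≫ inv f) g)
  have hzz : (f ≫ inv f) ≫ Bs.prj (f ≫ inv f) = 0 :=
    zero_swap inv hinv (isProj_sa (Bs.prj_isProjection _)) (isProj_sa hproj)
      (prj_comp inv Bs (f ≫ inv f))
  have h2 : Bs.prj (Bs.prj (f ≫ inv f)) = f ≫ inv f := by
    apply prj_unique inv hinv Bs _ _ hproj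
    intro X g
    constructor
    · intro h
      exact ⟨g, (closed inv hinv hC Bs _ hproj g h).symm⟩
    · rintro ⟨h, rfl⟩
      rw [Category.assoc, hzz, comp_zero]
  rw [h1, h2]

end St18

open St18


/-- In an exact inverse category, the transfer function
`P″(f)(j) = ((j ∘ f)′)′` satisfies: (i) injective iff `f` epi, surjective iff `f` mono;
(ii) `P″(f)(0) = 0` and `P″(f)(1) = f″`; (iii) `P″(f)((f*)′) = 0`; (iv) it is a
homomorphism of meet semilattices of projections; (v) it is order preserving;
(vi) `P″(f)(j) ≤ f″`; (vii) `P″(f)(j) = 0` if `j ≤ (f*)′`. -/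
theorem stmt18 [HasZeroObject C] [HasZeroMorphisms C] (inv : MorphismOp C)
    (hinv : IsInverseOp inv) (hC : IsExactCategory C) (Bs : BaerStar C inv)
    {A B : C} (f : A ⟶ B) :
    ((∀ j₁ j₂ : B ⟶ B, IsProjection inv j₁ → IsProjection inv j₂ →
        Bs.prj (Bs.prj (f ≫ j₁)) = Bs.prj (Bs.prj (f ≫ j₂)) → j₁ = j₂) ↔ Epi f) ∧
    ((∀ i : A ⟶ A, IsProjection inv i →
        ∃ j : B ⟶ B, IsProjection inv j ∧ Bs.prj (Bs.prj (f ≫ j)) = i) ↔ Mono f) ∧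
    Bs.prj (Bs.prj (f ≫ (0 : B ⟶ B))) = (0 : A ⟶ A) ∧
    Bs.prj (Bs.prj (f ≫ 𝟙 B)) = Bs.prj (Bs.prj f) ∧
    Bs.prj (Bs.prj (f ≫ Bs.prj (inv f))) = (0 : A ⟶ A) ∧
    (∀ j₁ j₂ : B ⟶ B, IsProjection inv j₁ → IsProjection inv j₂ →
      Bs.prj (Bs.prj (f ≫ (j₁ ≫ j₂))) =
        Bs.prj (Bs.prj (f ≫ j₁)) ≫ Bs.prj (Bs.prj (f ≫ j₂))) ∧
    (∀ j₁ j₂ : B ⟶ B, IsProjection inv j₁ → IsProjection inv j₂ → ProjLe j₁ j₂ →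
      ProjLe (Bs.prj (Bs.prj (f ≫ j₁))) (Bs.prj (Bs.prj (f ≫ j₂)))) ∧
    (∀ j : B ⟶ B, IsProjection inv j →
      ProjLe (Bs.prj (Bs.prj (f ≫ j))) (Bs.prj (Bs.prj f))) ∧
    (∀ j : B ⟶ B, IsProjection inv j → ProjLe j (Bs.prj (inv f)) →
      Bs.prj (Bs.prj (f ≫ j)) = (0 : A ⟶ A)) := by
  have key : ∀ (j : B ⟶ B), IsProjection inv j →
      Bs.prj (Bs.prj (f ≫ j)) = f ≫ j ≫ inv f := by
    intro j hj
    rw [prjprj inv hinv hC Bs, inv_comp inv hinv, isProj_sa hj, Category.assoc,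
      reassoc_of% (isProj_idem hj)]
  have hcomm : ∀ (j : B ⟶ B), j ≫ j = j → (inv f ≫ f) ≫ j = j ≫ (inv f ≫ f) :=
    fun j hj => idem_comm inv hinv (cod_idem inv hinv f) hj
  refine ⟨?_, ?_, ?_, ?_, ?_, ?_, ?_, ?_, ?_⟩
  · -- (i) injective ↔ epi
    constructor
    · intro hinj
      have hsa1 : inv (inv f ≫ f) = inv f ≫ f := by
        rw [inv_comp inv hinv, inv_inv inv hinv]
      have hproj1 : IsProjection inv (inv f ≫ f) := ⟨cod_idem inv hinv f, hsa1⟩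
      have hid : IsProjection inv (𝟙 B) := ⟨by simp, inv_id inv hinv B⟩
      have heq : Bs.prj (Bs.prj (f ≫ (inv f ≫ f))) = Bs.prj (Bs.prj (f ≫ 𝟙 B)) := by
        rw [key _ hproj1, key _ hid, Category.id_comp, Category.assoc, gfg inv hinv f]
      have hs : inv f ≫ f = 𝟙 B := hinj _ _ hproj1 hid heq
      refine ⟨fun {Z} g h H => ?_⟩
      calc g = (inv f ≫ f) ≫ g := by rw [hs, Category.id_comp]
        _ = inv f ≫ f ≫ h := by rw [Category.assoc, H]
        _ = (inv f ≫ f) ≫ h := by rw [Category.assoc]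
        _ = h := by rw [hs, Category.id_comp]
    · intro hepi j₁ j₂ hj₁ hj₂ heq
      have hs : inv f ≫ f = 𝟙 B := epi_inv_comp inv hinv f hepi
      rw [key _ hj₁, key _ hj₂] at heq
      have h2 := congrArg (fun t => inv f ≫ t ≫ f) heq
      simp only [Category.assoc, reassoc_of% hs, hs, Category.comp_id] at h2
      exact h2
  · -- (i) surjective ↔ mono
    constructor
    · intro hsurj
      obtain ⟨j, hj, hje⟩ := hsurj (𝟙 A) ⟨by simp, inv_id inv hinv A⟩
      rw [key _ hj] at hje
      refine ⟨fun {Z} g h H => ?_⟩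
      calc g = g ≫ f ≫ j ≫ inv f := by rw [hje, Category.comp_id]
        _ = (g ≫ f) ≫ j ≫ inv f := by rw [Category.assoc]
        _ = (h ≫ f) ≫ j ≫ inv f := by rw [H]
        _ = h ≫ f ≫ j ≫ inv f := by rw [Category.assoc]
        _ = h := by rw [hje, Category.comp_id]
    · intro hmono i hi
      have hs : f ≫ inv f = 𝟙 A := mono_comp_inv inv hinv f hmono
      have hproj : IsProjection inv (inv f ≫ i ≫ f) := by
        constructor
        · simp only [Category.assoc]
          rw [reassoc_of% hs, reassoc_of% (isProj_idem hi)]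
        · show inv (inv f ≫ i ≫ f) = inv f ≫ i ≫ f
          rw [inv_comp inv hinv, inv_comp inv hinv, isProj_sa hi, inv_inv inv hinv,
            Category.assoc]
      refine ⟨inv f ≫ i ≫ f, hproj, ?_⟩
      rw [key _ hproj]
      simp only [Category.assoc]
      rw [reassoc_of% hs, hs, Category.comp_id]
  · -- (ii) zero
    rw [comp_zero, prjprj inv hinv hC Bs, zero_comp]
  · -- (ii) identity
    rw [Category.comp_id]
  · -- (iii)
    rw [comp_prj_inv inv hinv Bs f, prjprj inv hinv hC Bs, zero_comp]
  · -- (iv)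
    intro j₁ j₂ hj₁ hj₂
    have hprod : IsProjection inv (j₁ ≫ j₂) := by
      constructor
      · exact idem_comp inv hinv (isProj_idem hj₁) (isProj_idem hj₂)
      · show inv (j₁ ≫ j₂) = j₁ ≫ j₂
        rw [inv_comp inv hinv, isProj_sa hj₁, isProj_sa hj₂,
          idem_comm inv hinv (isProj_idem hj₂) (isProj_idem hj₁)]
    rw [key _ hprod, key _ hj₁, key _ hj₂]
    symm
    simp only [Category.assoc]
    rw [reassoc_of% (hcomm j₂ (isProj_idem hj₂)), gfg inv hinv f]
  · -- (v)
    intro j₁ j₂ hj₁ hj₂ hle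
    rw [key _ hj₁, key _ hj₂]
    show (f ≫ j₂ ≫ inv f) ≫ (f ≫ j₁ ≫ inv f) = f ≫ j₁ ≫ inv f
    simp only [Category.assoc]
    rw [reassoc_of% (hcomm j₁ (isProj_idem hj₁)), gfg inv hinv f, reassoc_of% hle]
  · -- (vi)
    intro j hj
    rw [key _ hj, prjprj inv hinv hC Bs]
    show (f ≫ inv f) ≫ (f ≫ j ≫ inv f) = f ≫ j ≫ inv f
    simp only [Category.assoc]
    rw [reassoc_of% (fgf inv hinv f)]
  · -- (vii)
    intro j hj hle
    have hle' : Bs.prj (inv f) ≫ j = j := hle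
    have h0 : f ≫ j = 0 := by
      rw [← hle', ← Category.assoc, comp_prj_inv inv hinv Bs f, zero_comp]
    rw [h0, prjprj inv hinv hC Bs, zero_comp]
end
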